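/- Suppose M_r ∈ ℝ^{ρ_r×p} satisfies (1−δ)‖z‖₂² ≤ (p/ρ_r)‖M_r z‖₂² ≤ (1+δ)‖z‖₂² for all z ∈ span(P_{k_r}), with δ ∈ (0,1). Assume λ_{k_r+1} > 0 and γ'_r > 0. Let Ū ∈ ℝ^{p×k} have all columns in span(P_{k_r}), let Ẽ^u ∈ ℝ^{ρ_r×k}, and set Ũ = M_r Ū + Ẽ^u. Let U* be a minimizer over U ∈ ℝ^{p×k} of ‖M_r U − Ũ‖_F² + γ'_r tr(U^⊤ L_r U), and set Ū* = P_{k_r} P_{k_r}^⊤ U*, E* = U* − Ū*. Then ‖E*‖_F ≤ √(2/(γ'_r λ_{k_r+1})) ‖Ẽ^u‖_F + √(2 λ_{k_r}/λ_{k_r+1}) ‖Ū‖_F. -/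

import Mathlib

open Matrix

/-- Frobenius norm of a real matrix. -/
noncomputable def frobNorm {m n : Type*} [Fintype m] [Fintype n] (A : Matrix m n ℝ) : ℝ :=
  Real.sqrt (∑ i, ∑ j, (A i j) ^ 2)

/-- Euclidean norm of a real vector. -/
noncomputable def vecNorm {n : Type*} [Fintype n] (x : n → ℝ) : ℝ :=
  Real.sqrt (∑ i, (x i) ^ 2)

/-- A row-selection matrix: its rows are distinct standard basis vectors of `ℝ^p`. -/
def IsRowSelection {ρ p : ℕ} (M : Matrix (Fin ρ) (Fin p) ℝ) : Prop :=
  ∃ f : Fin ρ → Fin p, Function.Injective f ∧ ∀ i j, M i j = if j = f i then 1 else 0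

/-- A column-selection matrix: its columns are distinct standard basis vectors of `ℝ^n`. -/
def IsColSelection {n ρ : ℕ} (M : Matrix (Fin n) (Fin ρ) ℝ) : Prop :=
  ∃ f : Fin ρ → Fin n, Function.Injective f ∧ ∀ i j, M i j = if i = f j then 1 else 0

/-- `y` lies in the span of the columns of `P`. -/
def inColSpan {p k : ℕ} (P : Matrix (Fin p) (Fin k) ℝ) (y : Fin p → ℝ) : Prop :=
  ∃ c : Fin k → ℝ, y = P.mulVec c

/-- `Y ∈ LR(P, Q)`: every column of `Y` lies in the column span of `P` and every row of `Y`
lies in the column span of `Q`. -/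
def memLR {p n kr kc : ℕ} (P : Matrix (Fin p) (Fin kr) ℝ) (Q : Matrix (Fin n) (Fin kc) ℝ)
    (Y : Matrix (Fin p) (Fin n) ℝ) : Prop :=
  (∀ j, inColSpan P (fun i => Y i j)) ∧ (∀ i, inColSpan Q (fun j => Y i j))

/-- Graph cumulative coherence `ν = max_i √n ‖Q^⊤ e_i‖₂`. -/
noncomputable def coherence {n k : ℕ} (Q : Matrix (Fin n) (Fin k) ℝ) : ℝ :=
  ⨆ i : Fin n, Real.sqrt n * vecNorm (fun j => Q i j)


set_option maxHeartbeats 1000000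

lemma sum_castLE {p kr : ℕ} (h : kr ≤ p) (F : Fin p → ℝ) :
    ∑ j : Fin kr, F (Fin.castLE h j) = ∑ i : Fin p, if (i : ℕ) < kr then F i else 0 := by
  set f : ℕ → ℝ := fun i => if h' : i < p then (if i < kr then F ⟨i, h'⟩ else 0) else 0 with hf
  have hL : ∑ j : Fin kr, F (Fin.castLE h j) = ∑ j : Fin kr, f j := by
    apply Finset.sum_congr rfl
    intro j _
    simp [hf, j.isLt, lt_of_lt_of_le j.isLt h, Fin.castLE]
  have hR : ∑ i : Fin p, (if (i : ℕ) < kr then F i else 0) = ∑ i : Fin p, f i := by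
    apply Finset.sum_congr rfl
    intro i _
    simp [hf, i.isLt]
  rw [hL, hR, Fin.sum_univ_eq_sum_range f kr, Fin.sum_univ_eq_sum_range f p]
  apply Finset.sum_subset (Finset.range_subset_range.2 h)
  intro i _ hi
  simp only [Finset.mem_range, not_lt] at hi
  simp [hf, not_lt_of_ge hi]

lemma frobNorm_sq {m n : Type*} [Fintype m] [Fintype n] (A : Matrix m n ℝ) :
    (frobNorm A) ^ 2 = ∑ i, ∑ j, (A i j) ^ 2 :=
  Real.sq_sqrt (by positivity)

/-- bound on `‖E*‖_F = ‖U* − Ū*‖_F` for the split subspace decoder, where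
`Ū* = P_{k_r} P_{k_r}^⊤ U*` and `U*` minimizes `‖M_r U − Ũ‖_F² + γ'_r tr(U^⊤ L_r U)`.
The 1-indexed eigenvalues `λ_{k_r}`, `λ_{k_r+1}` of `L_r` are `ev ⟨k_r−1⟩`, `ev ⟨k_r⟩`. -/
theorem approximate_decoder_E_bound
    (p ρr kr k : ℕ) (hkr0 : 0 < kr) (hkr : kr < p)
    (Lr : Matrix (Fin p) (Fin p) ℝ) (hLr : Lr.PosSemidef)
    (ev : Fin p → ℝ) (hev : Monotone ev)
    (P : Matrix (Fin p) (Fin p) ℝ) (hPorth : Pᵀ * P = 1)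
    (hLrP : Lr * P = P * Matrix.diagonal ev)
    (Pkr : Matrix (Fin p) (Fin kr) ℝ) (hPkr : Pkr = P.submatrix id (Fin.castLE hkr.le))
    (Mr : Matrix (Fin ρr) (Fin p) ℝ) (hMr : IsRowSelection Mr)
    (δ : ℝ) (hδ : δ ∈ Set.Ioo (0 : ℝ) 1)
    (hRIP : ∀ z : Fin p → ℝ, inColSpan Pkr z →
      (1 - δ) * (vecNorm z) ^ 2 ≤ ((p : ℝ) / ρr) * (vecNorm (Mr.mulVec z)) ^ 2 ∧
      ((p : ℝ) / ρr) * (vecNorm (Mr.mulVec z)) ^ 2 ≤ (1 + δ) * (vecNorm z) ^ 2)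
    (hlam1 : 0 < ev ⟨kr, hkr⟩)
    (γr' : ℝ) (hγr' : 0 < γr')
    (Ubar : Matrix (Fin p) (Fin k) ℝ) (hUbar : ∀ j, inColSpan Pkr (fun i => Ubar i j))
    (Eu : Matrix (Fin ρr) (Fin k) ℝ)
    (Util : Matrix (Fin ρr) (Fin k) ℝ) (hUtil : Util = Mr * Ubar + Eu)
    (Ustar : Matrix (Fin p) (Fin k) ℝ)
    (hmin : ∀ U : Matrix (Fin p) (Fin k) ℝ,
      (frobNorm (Mr * Ustar - Util)) ^ 2 + γr' * Matrix.trace (Ustarᵀ * Lr * Ustar) ≤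
      (frobNorm (Mr * U - Util)) ^ 2 + γr' * Matrix.trace (Uᵀ * Lr * U)) :
    frobNorm (Ustar - Pkr * Pkrᵀ * Ustar) ≤
      Real.sqrt (2 / (γr' * ev ⟨kr, hkr⟩)) * frobNorm Eu +
        Real.sqrt (2 * ev ⟨kr - 1, by omega⟩ / ev ⟨kr, hkr⟩) * frobNorm Ubar := by
  have hPPt : P * Pᵀ = 1 := mul_eq_one_comm.mp hPorth
  have hrec : ∀ u : Fin p → ℝ, P.mulVec (Pᵀ.mulVec u) = u := by
    intro u; rw [Matrix.mulVec_mulVec, hPPt, Matrix.one_mulVec]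
  have hPtP : ∀ v : Fin p → ℝ, Pᵀ.mulVec (P.mulVec v) = v := by
    intro v; rw [Matrix.mulVec_mulVec, hPorth, Matrix.one_mulVec]
  -- norm preservation
  have hnorm : ∀ v : Fin p → ℝ, ∑ i, (P.mulVec v i) ^ 2 = ∑ i, (v i) ^ 2 := by
    intro v
    have : (P.mulVec v) ⬝ᵥ (P.mulVec v) = v ⬝ᵥ v := by
      rw [Matrix.dotProduct_mulVec, ← Matrix.mulVec_transpose, hPtP]
    simpa [dotProduct, pow_two] using this
  -- quadratic form
  have hq : ∀ u : Fin p → ℝ, u ⬝ᵥ Lr.mulVec u = ∑ i, ev i * (Pᵀ.mulVec u i) ^ 2 := by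
    intro u
    have h1 : Lr.mulVec u = P.mulVec ((Matrix.diagonal ev).mulVec (Pᵀ.mulVec u)) := by
      conv_lhs => rw [← hrec u]
      rw [Matrix.mulVec_mulVec, hLrP, ← Matrix.mulVec_mulVec]
    rw [h1, Matrix.dotProduct_mulVec, ← Matrix.mulVec_transpose]
    simp only [dotProduct, Matrix.mulVec_diagonal, pow_two]
    exact Finset.sum_congr rfl fun i _ => by ring
  -- ev nonneg
  have hev0 : ∀ i, 0 ≤ ev i := by
    intro i
    have h := hLr.dotProduct_mulVec_nonneg (P.mulVec (Pi.single i 1))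
    simp only [star_trivial] at h
    rw [hq] at h
    rw [hPtP] at h
    simpa [Pi.single_apply, Finset.sum_ite_eq'] using h
  have hPkrApp : ∀ i j, Pkr i j = P i (Fin.castLE hkr.le j) := by
    intro i j; rw [hPkr]; rfl
  have key_low : ∀ c : Fin kr → ℝ,
      (Pkr.mulVec c) ⬝ᵥ Lr.mulVec (Pkr.mulVec c) ≤ ev ⟨kr - 1, by omega⟩ * ∑ i, (Pkr.mulVec c i) ^ 2 := by
    intro c
    set c' : Fin p → ℝ := fun i => if h : (i : ℕ) < kr then c ⟨i, h⟩ else 0 with hc'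
    have hu : Pkr.mulVec c = P.mulVec c' := by
      funext i
      show ∑ j, Pkr i j * c j = ∑ i' : Fin p, P i i' * c' i'
      calc ∑ j, Pkr i j * c j = ∑ j : Fin kr, (fun i' => P i i' * c' i') (Fin.castLE hkr.le j) := by
            apply Finset.sum_congr rfl; intro j _
            simp [hPkrApp, hc', j.isLt, Fin.castLE]
        _ = ∑ i' : Fin p, if (i' : ℕ) < kr then P i i' * c' i' else 0 := sum_castLE hkr.le (fun i' => P i i' * c' i')
        _ = ∑ i' : Fin p, P i i' * c' i' := by
            apply Finset.sum_congr rfl; intro i' _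
            by_cases h : (i' : ℕ) < kr
            · simp [h]
            · simp [h, hc']
    have hy : Pᵀ.mulVec (Pkr.mulVec c) = c' := by rw [hu, hPtP]
    rw [hq, hy, hu, hnorm]
    rw [Finset.mul_sum]
    apply Finset.sum_le_sum
    intro i _
    by_cases h : (i : ℕ) < kr
    · have hle : ev i ≤ ev ⟨kr - 1, by omega⟩ := hev (by simp [Fin.le_def]; omega)
      nlinarith [sq_nonneg (c' i)]
    · simp [hc', h]
  have key_high : ∀ u : Fin p → ℝ,
      ev ⟨kr, hkr⟩ * ∑ i, (u i - (Pkr * Pkrᵀ).mulVec u i) ^ 2 ≤ u ⬝ᵥ Lr.mulVec u := by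
    intro u
    set z : Fin p → ℝ := fun i => if (i : ℕ) < kr then 0 else Pᵀ.mulVec u i with hz
    have hdiff : ∀ i, u i - (Pkr * Pkrᵀ).mulVec u i = P.mulVec z i := by
      intro i
      have h2 : (Pkr * Pkrᵀ).mulVec u i = ∑ i' : Fin p, if (i' : ℕ) < kr then P i i' * Pᵀ.mulVec u i' else 0 := by
        rw [← Matrix.mulVec_mulVec]
        show ∑ j, Pkr i j * (Pkrᵀ.mulVec u) j = _
        calc ∑ j, Pkr i j * (Pkrᵀ.mulVec u) j
            = ∑ j : Fin kr, (fun i' => P i i' * Pᵀ.mulVec u i') (Fin.castLE hkr.le j) := by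
              apply Finset.sum_congr rfl; intro j _
              simp only [hPkrApp]
              congr 1
              simp [Matrix.mulVec, dotProduct, Matrix.transpose_apply, hPkrApp]
          _ = _ := sum_castLE hkr.le (fun i' => P i i' * Pᵀ.mulVec u i')
      have h3 : u i = ∑ i' : Fin p, P i i' * Pᵀ.mulVec u i' := by
        conv_lhs => rw [← hrec u]
        rfl
      rw [h2, h3, ← Finset.sum_sub_distrib]
      show _ = ∑ i' : Fin p, P i i' * z i'
      apply Finset.sum_congr rfl
      intro i' _
      by_cases h : (i' : ℕ) < kr
      · simp [hz, h]
      · simp [hz, h]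
    have hsum : ∑ i, (u i - (Pkr * Pkrᵀ).mulVec u i) ^ 2 = ∑ i' : Fin p, z i' ^ 2 := by
      calc ∑ i, (u i - (Pkr * Pkrᵀ).mulVec u i) ^ 2 = ∑ i, (P.mulVec z i) ^ 2 := by
            apply Finset.sum_congr rfl; intro i _; rw [hdiff]
        _ = _ := hnorm z
    rw [hsum, hq u, Finset.mul_sum]
    apply Finset.sum_le_sum
    intro i _
    by_cases h : (i : ℕ) < kr
    · simp only [hz, h, if_true]
      have := mul_nonneg (hev0 i) (sq_nonneg (Pᵀ.mulVec u i))
      simpa using this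
    · have h1 : ev ⟨kr, hkr⟩ ≤ ev i := hev (by simp [Fin.le_def]; omega)
      simp only [hz, h, if_false]
      nlinarith [sq_nonneg (Pᵀ.mulVec u i)]
  -- trace as sum of column quadratic forms
  have htr : ∀ U : Matrix (Fin p) (Fin k) ℝ, Matrix.trace (Uᵀ * Lr * U)
      = ∑ j, (fun i => U i j) ⬝ᵥ Lr.mulVec (fun i => U i j) := by
    intro U
    simp only [Matrix.trace, Matrix.diag, Matrix.mul_apply, dotProduct, Matrix.mulVec,
      Matrix.transpose_apply, Finset.sum_mul, Finset.mul_sum]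
    apply Finset.sum_congr rfl; intro j _
    rw [Finset.sum_comm]
    apply Finset.sum_congr rfl; intro l _
    apply Finset.sum_congr rfl; intro i _
    ring
  have hcolPP : ∀ (i : Fin p) (j : Fin k),
      (Pkr * Pkrᵀ * Ustar) i j = (Pkr * Pkrᵀ).mulVec (fun i => Ustar i j) i := by
    intro i j
    simp [Matrix.mul_apply, Matrix.mulVec, dotProduct]
  have hEsq : (frobNorm (Ustar - Pkr * Pkrᵀ * Ustar)) ^ 2
      = ∑ j, ∑ i, (Ustar i j - (Pkr * Pkrᵀ).mulVec (fun i => Ustar i j) i) ^ 2 := by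
    rw [frobNorm_sq, Finset.sum_comm]
    apply Finset.sum_congr rfl; intro j _
    apply Finset.sum_congr rfl; intro i _
    rw [Matrix.sub_apply, hcolPP]
  have hA : ev ⟨kr, hkr⟩ * (frobNorm (Ustar - Pkr * Pkrᵀ * Ustar)) ^ 2
      ≤ Matrix.trace (Ustarᵀ * Lr * Ustar) := by
    rw [hEsq, htr Ustar, Finset.mul_sum]
    exact Finset.sum_le_sum fun j _ => key_high (fun i => Ustar i j)
  have hB : Matrix.trace (Ubarᵀ * Lr * Ubar) ≤ ev ⟨kr - 1, by omega⟩ * (frobNorm Ubar) ^ 2 := by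
    rw [htr Ubar, frobNorm_sq, Finset.sum_comm, Finset.mul_sum]
    apply Finset.sum_le_sum; intro j _
    obtain ⟨c, hc⟩ := hUbar j
    have hci : ∀ i, Ubar i j = Pkr.mulVec c i := fun i => congrFun hc i
    calc (fun i => Ubar i j) ⬝ᵥ Lr.mulVec (fun i => Ubar i j)
        = (Pkr.mulVec c) ⬝ᵥ Lr.mulVec (Pkr.mulVec c) := by rw [hc]
      _ ≤ ev ⟨kr - 1, by omega⟩ * ∑ i, (Pkr.mulVec c i) ^ 2 := key_low c
      _ = ev ⟨kr - 1, by omega⟩ * ∑ i, (Ubar i j) ^ 2 := by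
          congr 1
          exact Finset.sum_congr rfl fun i _ => by rw [hci i]
  have hMsub : Mr * Ubar - Util = -Eu := by rw [hUtil]; abel
  have hfrobM : (frobNorm (Mr * Ubar - Util)) ^ 2 = (frobNorm Eu) ^ 2 := by
    rw [hMsub, frobNorm_sq, frobNorm_sq]
    simp [Matrix.neg_apply]
  have hγTs : γr' * Matrix.trace (Ustarᵀ * Lr * Ustar)
      ≤ (frobNorm Eu) ^ 2 + γr' * Matrix.trace (Ubarᵀ * Lr * Ubar) := by
    have h := hmin Ubar
    rw [hfrobM] at h
    have := sq_nonneg (frobNorm (Mr * Ustar - Util))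
    linarith
  set e := frobNorm (Ustar - Pkr * Pkrᵀ * Ustar) with he'
  set a := frobNorm Eu with ha'
  set b := frobNorm Ubar with hb'
  set lam1 := ev ⟨kr, hkr⟩ with hl1
  set lam0 := ev ⟨kr - 1, by omega⟩ with hl0
  have hmain : γr' * lam1 * e ^ 2 ≤ a ^ 2 + γr' * lam0 * b ^ 2 := by
    have h4 := mul_le_mul_of_nonneg_left hA hγr'.le
    have h5 := mul_le_mul_of_nonneg_left hB hγr'.le
    nlinarith
  have hlam0n : (0:ℝ) ≤ lam0 := hev0 _
  have ha : (0:ℝ) ≤ a := Real.sqrt_nonneg _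
  have hb : (0:ℝ) ≤ b := Real.sqrt_nonneg _
  have he : (0:ℝ) ≤ e := Real.sqrt_nonneg _
  set s1 := Real.sqrt (2 / (γr' * lam1)) with hs1'
  set s2 := Real.sqrt (2 * lam0 / lam1) with hs2'
  have hs1n : (0:ℝ) ≤ s1 := Real.sqrt_nonneg _
  have hs2n : (0:ℝ) ≤ s2 := Real.sqrt_nonneg _
  have hs1 : s1 ^ 2 = 2 / (γr' * lam1) := Real.sq_sqrt (by positivity)
  have hs2 : s2 ^ 2 = 2 * lam0 / lam1 := Real.sq_sqrt (by positivity)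
  have hgl : (0:ℝ) < γr' * lam1 := mul_pos hγr' hlam1
  have hs1e : s1 ^ 2 * (γr' * lam1) = 2 := by rw [hs1]; field_simp
  have hs2e : s2 ^ 2 * lam1 = 2 * lam0 := by
    rw [hs2]; field_simp
  have h1 : γr' * lam1 * (s1 ^ 2 * a ^ 2) = 2 * a ^ 2 := by
    rw [show γr' * lam1 * (s1 ^ 2 * a ^ 2) = s1 ^ 2 * (γr' * lam1) * a ^ 2 from by ring, hs1e]
  have h2 : γr' * lam1 * (s2 ^ 2 * b ^ 2) = 2 * (γr' * lam0) * b ^ 2 := by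
    rw [show γr' * lam1 * (s2 ^ 2 * b ^ 2) = γr' * (s2 ^ 2 * lam1) * b ^ 2 from by ring, hs2e]
    ring
  have h3 : e ^ 2 ≤ s1 ^ 2 * a ^ 2 + s2 ^ 2 * b ^ 2 := by
    have hx : γr' * lam1 * e ^ 2 ≤ γr' * lam1 * (s1 ^ 2 * a ^ 2 + s2 ^ 2 * b ^ 2) := by
      calc γr' * lam1 * e ^ 2 ≤ a ^ 2 + γr' * lam0 * b ^ 2 := hmain
        _ ≤ 2 * a ^ 2 + 2 * (γr' * lam0) * b ^ 2 := by
            nlinarith [sq_nonneg a, mul_nonneg (mul_nonneg hγr'.le hlam0n) (sq_nonneg b)]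
        _ = γr' * lam1 * (s1 ^ 2 * a ^ 2 + s2 ^ 2 * b ^ 2) := by rw [mul_add, h1, h2]
    exact le_of_mul_le_mul_left hx hgl
  have hfin : e ^ 2 ≤ (s1 * a + s2 * b) ^ 2 := by
    nlinarith [mul_nonneg (mul_nonneg hs1n ha) (mul_nonneg hs2n hb), h3]
  calc e = Real.sqrt (e ^ 2) := (Real.sqrt_sq he).symm
    _ ≤ Real.sqrt ((s1 * a + s2 * b) ^ 2) := Real.sqrt_le_sqrt hfin
    _ = s1 * a + s2 * b := Real.sqrt_sq (by positivity)
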